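/- arXiv:1805.09230 — 2 statements merged into one kernel-verified Lean document; each statement's English description precedes it below -/
import Mathlib

section
/- If f is a C^m function on ℝ^N, then for every x, h ∈ ℝ^N and every positive integer m, the m-th finite difference admits the integral representation Δ_h^m f(x) = ∫_{[0,1]^m} D^m f(x + (t_1 + ⋯ + t_m) h)(h, …, h) dt_1 ⋯ dt_m, where D^m f(x)(h,…,h) = Σ_{1 ≤ i_1,…,i_m ≤ N} h_{i_1} ⋯ h_{i_m} ∂^m f / (∂x_{i_1} ⋯ ∂x_{i_m})(x). -/
open MeasureTheory Filter Set

noncomputable section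

abbrev E (N : ℕ) : Type := EuclideanSpace ℝ (Fin N)

noncomputable def iterDiff {N : ℕ} (f : E N → ℝ) (h : E N) : ℕ → E N → ℝ
  | 0 => f
  | m + 1 => fun x => iterDiff f h m (x + h) - iterDiff f h m x

lemma contG {N n : ℕ} {f : E N → ℝ} (hf : ContDiff ℝ n f) (h : E N) :
    Continuous fun y => iteratedFDeriv ℝ n f y (fun _ => h) :=
  (ContinuousMultilinearMap.apply ℝ (fun _ : Fin n => E N) ℝ (fun _ => h)).continuous.comp
    (hf.continuous_iteratedFDeriv le_rfl)

lemma ftc_step {N n : ℕ} {f : E N → ℝ} (hf : ContDiff ℝ (n + 1) f) (h y : E N) :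
    iteratedFDeriv ℝ n f (y + h) (fun _ => h) - iteratedFDeriv ℝ n f y (fun _ => h)
      = ∫ s in Icc (0 : ℝ) 1, iteratedFDeriv ℝ (n + 1) f (y + s • h) (fun _ => h) := by
  set L := ContinuousMultilinearMap.apply ℝ (fun _ : Fin n => E N) ℝ (fun _ => h) with hL
  have key : ∀ s : ℝ, HasDerivAt (fun s : ℝ => iteratedFDeriv ℝ n f (y + s • h) (fun _ => h))
      (iteratedFDeriv ℝ (n + 1) f (y + s • h) (fun _ => h)) s := by
    intro s
    have h1 : HasDerivAt (fun s : ℝ => y + s • h) h s := by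
      simpa using ((hasDerivAt_id s).smul_const h).const_add y
    have hdiff : HasFDerivAt (iteratedFDeriv ℝ n f)
        (fderiv ℝ (iteratedFDeriv ℝ n f) (y + s • h)) (y + s • h) :=
      ((hf.differentiable_iteratedFDeriv (by exact_mod_cast Nat.lt_succ_self n)) _).hasFDerivAt
    have h2 := hdiff.comp_hasDerivAt s h1
    have h3 := L.hasFDerivAt.comp_hasDerivAt s h2
    rw [iteratedFDeriv_succ_apply_left]
    exact h3
  have cont : Continuous fun s : ℝ => iteratedFDeriv ℝ (n + 1) f (y + s • h) (fun _ => h) :=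
    (contG hf h).comp (by continuity)
  rw [MeasureTheory.integral_Icc_eq_integral_Ioc, ← intervalIntegral.integral_of_le zero_le_one,
    intervalIntegral.integral_eq_sub_of_hasDerivAt (fun s _ => key s)
      (cont.intervalIntegrable 0 1)]
  simp

theorem iterDiff_eq_integral {N : ℕ} (m : ℕ) (hm : 0 < m) (f : E N → ℝ)
    (hf : ContDiff ℝ m f) (x h : E N) :
    iterDiff f h m x =
      ∫ t in Set.univ.pi fun _ : Fin m => Set.Icc (0 : ℝ) 1,
        iteratedFDeriv ℝ m f (x + (∑ i, t i) • h) (fun _ => h) := by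
  clear hm
  induction m generalizing x with
  | zero =>
    rw [show (Set.univ.pi fun _ : Fin 0 => Icc (0 : ℝ) 1) = Set.univ from by ext t; simp,
      Measure.restrict_univ]
    simp only [Finset.univ_eq_empty, Finset.sum_empty, zero_smul, add_zero,
      iteratedFDeriv_zero_apply, integral_const]
    rw [show (volume : Measure (Fin 0 → ℝ)).real Set.univ = 1 from by
      simp [volume_pi, Measure.pi_univ, measureReal_def]]
    simp [iterDiff]
  | succ m ih =>
    have hf' : ContDiff ℝ m f := hf.of_le (by exact_mod_cast Nat.le_succ m)
    have hfS : ContDiff ℝ (m + 1) f := by exact_mod_cast hf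
    have hcube : MeasurableSet (Set.univ.pi fun _ : Fin m => Icc (0 : ℝ) 1) :=
      MeasurableSet.univ_pi fun _ => measurableSet_Icc
    have hcompact : IsCompact (Set.univ.pi fun _ : Fin m => Icc (0 : ℝ) 1) :=
      isCompact_univ_pi fun _ => isCompact_Icc
    have hint : ∀ x' : E N, IntegrableOn
        (fun t : Fin m → ℝ => iteratedFDeriv ℝ m f (x' + (∑ i, t i) • h) (fun _ => h))
        (Set.univ.pi fun _ : Fin m => Icc (0 : ℝ) 1) volume := fun x' =>
      (((contG hf' h).comp (continuous_const.add
        ((continuous_finset_sum _ fun i _ => continuous_apply i).smul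
          continuous_const))).continuousOn).integrableOn_compact hcompact
    have hFcont : Continuous fun u : ℝ => iteratedFDeriv ℝ (m + 1) f (x + u • h) (fun _ => h) :=
      (contG hfS h).comp (continuous_const.add (continuous_id.smul continuous_const))
    have step1 : ∀ t ∈ (Set.univ.pi fun _ : Fin m => Icc (0 : ℝ) 1),
        (fun t : Fin m → ℝ => iteratedFDeriv ℝ m f (x + h + (∑ i, t i) • h) (fun _ => h)
          - iteratedFDeriv ℝ m f (x + (∑ i, t i) • h) (fun _ => h)) t
        = (fun t : Fin m → ℝ => ∫ s in Icc (0 : ℝ) 1,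
            iteratedFDeriv ℝ (m + 1) f (x + ((∑ i, t i) + s) • h) (fun _ => h)) t := by
      intro t _
      have hftc := ftc_step (n := m) hfS h (x + (∑ i, t i) • h)
      simp only [show x + h + (∑ i, t i) • h = x + (∑ i, t i) • h + h by abel, hftc]
      congr 1
      ext s
      rw [add_smul, add_assoc]
    rw [show iterDiff f h (m + 1) x = iterDiff f h m (x + h) - iterDiff f h m x from rfl,
      ih hf' (x + h), ih hf' x, ← integral_sub (hint (x + h)) (hint x),
      setIntegral_congr_fun hcube step1]
    have mp : MeasurePreserving (MeasurableEquiv.piFinSuccAbove (fun _ : Fin (m + 1) => ℝ) 0)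
        volume ((volume : Measure ℝ).prod (volume : Measure (Fin m → ℝ))) := by
      have := measurePreserving_piFinSuccAbove (fun _ : Fin (m + 1) => (volume : Measure ℝ)) 0
      simpa [volume_pi] using this
    have hG : IntegrableOn
        (fun p : ℝ × (Fin m → ℝ) =>
          iteratedFDeriv ℝ (m + 1) f (x + ((∑ i, p.2 i) + p.1) • h) (fun _ => h))
        (Icc (0 : ℝ) 1 ×ˢ Set.univ.pi fun _ : Fin m => Icc (0 : ℝ) 1) (volume.prod volume) :=
      ((hFcont.comp ((continuous_finset_sum _ fun i _ =>
          (continuous_apply i).comp continuous_snd).add continuous_fst)).continuousOn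
        ).integrableOn_compact (isCompact_Icc.prod hcompact)
    have hpre : (MeasurableEquiv.piFinSuccAbove (fun _ : Fin (m + 1) => ℝ) 0) ⁻¹'
        ((Icc (0 : ℝ) 1) ×ˢ (Set.univ.pi fun _ : Fin m => Icc (0 : ℝ) 1))
        = Set.univ.pi fun _ : Fin (m + 1) => Icc (0 : ℝ) 1 := by
      ext t
      simp only [mem_preimage, MeasurableEquiv.piFinSuccAbove, MeasurableEquiv.coe_mk,
        Fin.insertNthEquiv, Equiv.coe_fn_symm_mk, mem_prod, Set.mem_pi, mem_univ, true_implies,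
        Fin.removeNth, Fin.succAbove_zero]
      constructor
      · rintro ⟨h0, hs⟩ i
        exact Fin.cases h0 hs i
      · intro hall
        exact ⟨hall 0, fun j => hall j.succ⟩
    calc
      ∫ t in Set.univ.pi fun _ : Fin m => Icc (0 : ℝ) 1, ∫ s in Icc (0 : ℝ) 1,
            iteratedFDeriv ℝ (m + 1) f (x + ((∑ i, t i) + s) • h) (fun _ => h)
          = ∫ s in Icc (0 : ℝ) 1, ∫ t in Set.univ.pi fun _ : Fin m => Icc (0 : ℝ) 1,
            iteratedFDeriv ℝ (m + 1) f (x + ((∑ i, t i) + s) • h) (fun _ => h) := by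
            apply (integral_integral_swap ?_).symm
            rw [Measure.prod_restrict]
            exact hG
      _ = ∫ p in (Icc (0 : ℝ) 1) ×ˢ (Set.univ.pi fun _ : Fin m => Icc (0 : ℝ) 1),
            iteratedFDeriv ℝ (m + 1) f (x + ((∑ i, p.2 i) + p.1) • h) (fun _ => h)
            ∂((volume : Measure ℝ).prod volume) := (setIntegral_prod _ hG).symm
      _ = ∫ t in Set.univ.pi fun _ : Fin (m + 1) => Icc (0 : ℝ) 1,
            iteratedFDeriv ℝ (m + 1) f (x + (∑ i, t i) • h) (fun _ => h) := by
            rw [← mp.setIntegral_preimage_emb (MeasurableEquiv.measurableEmbedding _)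
              (fun p : ℝ × (Fin m → ℝ) =>
                iteratedFDeriv ℝ (m + 1) f (x + ((∑ i, p.2 i) + p.1) • h) (fun _ => h)),
              hpre]
            refine setIntegral_congr_fun (MeasurableSet.univ_pi fun _ => measurableSet_Icc) ?_
            intro t _
            simp only [MeasurableEquiv.piFinSuccAbove, MeasurableEquiv.coe_mk,
              Fin.insertNthEquiv, Equiv.coe_fn_symm_mk, Fin.removeNth, Fin.succAbove_zero]
            have hsum : (∑ j : Fin m, t j.succ) + t 0 = ∑ i, t i := by
              rw [Fin.sum_univ_succ]; ring
            rw [hsum]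
end
end

section
/- Let K ⊂ ℝ^N be convex, symmetric, containing 0 with nonempty interior, with gauge ‖·‖_K satisfying A|x| ≤ ‖x‖_K. If f ∈ C_c^{m+1}(ℝ^N) with S = ‖f‖_{W^{m+1,∞}}, then for any δ > 0 there is C = C(δ) > 0 such that for all x ∈ ℝ^N and h ∈ ℝ^N \ {0}: | m^{mp} |R^m f(x, x+h)|^p ‖h‖_K^{-mp} − |D^m f(x)(h/‖h‖_K, …, h/‖h‖_K)|^p | ≤ C A^{-m-1} S ‖h‖_K + δ. -/
open MeasureTheory Filter Set

noncomputable section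

noncomputable def Rm {N : ℕ} (m : ℕ) (f : E N → ℝ) (x y : E N) : ℝ :=
  ∑ j ∈ Finset.range (m + 1), (-1 : ℝ) ^ j * (m.choose j : ℝ) *
    f ((((m - j : ℕ) : ℝ) / (m : ℝ)) • x + ((j : ℝ) / (m : ℝ)) • y)


lemma fwd_iter_zero (m : ℕ) : (fwdDiff (1:ℝ))^[m] (fun _ : ℝ => (0:ℝ)) = fun _ => 0 := by
  induction m with
  | zero => rfl
  | succ m IH => rw [Function.iterate_succ_apply, show fwdDiff (1:ℝ) (fun _ : ℝ => (0:ℝ)) = fun _ => 0 from fwdDiff_const _ _, IH]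

lemma comb_pow (m : ℕ) : ∀ k : ℕ, k ≤ m →
    (fwdDiff (1:ℝ))^[m] (fun s : ℝ => s ^ k) = fun _ => if k = m then (Nat.factorial m : ℝ) else 0 := by
  induction m with
  | zero =>
    intro k hk
    interval_cases k
    simp [Nat.factorial]
  | succ m IH =>
    intro k hk
    rcases Nat.eq_zero_or_pos k with rfl | hk0
    · have h1 : (fun s : ℝ => s ^ 0) = fun _ : ℝ => (1:ℝ) := by simp
      rw [Function.iterate_succ_apply, h1, show fwdDiff (1:ℝ) (fun _ : ℝ => (1:ℝ)) = fun _ => 0 from fwdDiff_const _ _, fwd_iter_zero]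
      simp
    · have expand : fwdDiff (1:ℝ) (fun s : ℝ => s ^ k) = fun s : ℝ => ∑ i ∈ Finset.range k, (k.choose i : ℝ) * s ^ i := by
        funext s
        simp only [fwdDiff]
        rw [add_pow, Finset.sum_range_succ]
        simp [mul_comm]
      have expand2 : (fun s : ℝ => ∑ i ∈ Finset.range k, (k.choose i : ℝ) * s ^ i)
          = ∑ i ∈ Finset.range k, (k.choose i : ℝ) • (fun s : ℝ => s ^ i) := by
        funext s
        simp [smul_eq_mul]
      rw [Function.iterate_succ_apply, expand, expand2, fwdDiff_iter_finset_sum]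
      have : ∀ i ∈ Finset.range k, (fwdDiff (1:ℝ))^[m] ((k.choose i : ℝ) • (fun s : ℝ => s ^ i))
          = (k.choose i : ℝ) • (fun _ : ℝ => if i = m then (Nat.factorial m : ℝ) else 0) := by
        intro i hi
        rw [fwdDiff_iter_const_smul, IH i (by have := Finset.mem_range.mp hi; omega)]
      rw [Finset.sum_congr rfl this]
      funext s
      rw [Finset.sum_apply]
      simp only [Pi.smul_apply, smul_eq_mul, mul_ite, mul_zero]
      rw [Finset.sum_ite_eq' (Finset.range k) m (fun i => (k.choose i : ℝ) * (Nat.factorial m : ℝ))]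
      rcases eq_or_lt_of_le hk with rfl | hk'
      · rw [if_pos (Finset.mem_range.mpr (by omega)), if_pos rfl,
          Nat.choose_succ_self_right, Nat.factorial_succ]
        push_cast
        ring
      · rw [if_neg (by simp only [Finset.mem_range]; omega), if_neg (by omega)]


lemma iteratedDeriv_line (n : ℕ) (f : E N → ℝ) (hf : ContDiff ℝ n f)
    (x t : E N) : ∀ k : ℕ, k ≤ n → ∀ s : ℝ,
    iteratedDeriv k (fun s : ℝ => f (x + s • t)) s
      = iteratedFDeriv ℝ k f (x + s • t) (fun _ => t) := by
  intro k
  induction k with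
  | zero => intro _ s; simp [iteratedDeriv_zero, iteratedFDeriv_zero_apply]
  | succ k IH =>
    intro hk s
    rw [iteratedDeriv_succ]
    have hderiv : ∀ u : ℝ, iteratedDeriv k (fun s : ℝ => f (x + s • t)) u
        = iteratedFDeriv ℝ k f (x + u • t) (fun _ => t) := IH (le_trans (Nat.le_succ k) hk)
    have hline : ∀ u : ℝ, HasDerivAt (fun s : ℝ => x + s • t) t u := by
      intro u
      simpa using ((hasDerivAt_id u).smul_const t).const_add x
    have hdiff : Differentiable ℝ (iteratedFDeriv ℝ k f) :=
      hf.differentiable_iteratedFDeriv (by exact_mod_cast lt_of_lt_of_le (Nat.lt_succ_self k) hk)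
    have h1 : HasDerivAt (fun u : ℝ => iteratedFDeriv ℝ k f (x + u • t))
        (fderiv ℝ (iteratedFDeriv ℝ k f) (x + s • t) t) s :=
      (hdiff (x + s • t)).hasFDerivAt.comp_hasDerivAt s (hline s)
    have h2 : HasDerivAt (fun u : ℝ => iteratedFDeriv ℝ k f (x + u • t) (fun _ => t))
        ((ContinuousMultilinearMap.apply ℝ (fun _ : Fin k => E N) ℝ (fun _ => t))
          (fderiv ℝ (iteratedFDeriv ℝ k f) (x + s • t) t)) s :=
      ((ContinuousMultilinearMap.apply ℝ (fun _ : Fin k => E N) ℝ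
        (fun _ => t)).hasFDerivAt).comp_hasDerivAt s h1
    have h3 : deriv (fun u : ℝ => iteratedFDeriv ℝ k f (x + u • t) (fun _ => t)) s
        = (fderiv ℝ (iteratedFDeriv ℝ k f) (x + s • t) t) (fun _ => t) := h2.deriv
    calc deriv (iteratedDeriv k fun s => f (x + s • t)) s
        = deriv (fun u : ℝ => iteratedFDeriv ℝ k f (x + u • t) (fun _ => t)) s := by
          congr 1; funext u; exact hderiv u
      _ = (fderiv ℝ (iteratedFDeriv ℝ k f) (x + s • t) t) (fun _ => t) := h3
      _ = iteratedFDeriv ℝ (k+1) f (x + s • t) (fun _ => t) := by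
          rw [iteratedFDeriv_succ_apply_left]
          congr

lemma iterDW_eq (g : ℝ → ℝ) (n : ℕ) (hg : ContDiff ℝ n g) {s : Set ℝ}
    (hs : UniqueDiffOn ℝ s) {y : ℝ} (hy : y ∈ s) (k : ℕ) (hk : k ≤ n) :
    iteratedDerivWithin k g s y = iteratedDeriv k g y := by
  rw [iteratedDerivWithin_eq_iteratedFDerivWithin, iteratedDeriv_eq_iteratedFDeriv]
  congr 1
  have h := ((contDiff_iff_ftaylorSeries.mp hg).hasFTaylorSeriesUpToOn
      s).eq_iteratedFDerivWithin_of_uniqueDiffOn (by exact_mod_cast hk) hs hy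
  exact h.symm

lemma taylor_global (g : ℝ → ℝ) (m : ℕ) (hg : ContDiff ℝ (m+1) g) (B : ℝ)
    (hB : ∀ s : ℝ, |iteratedDeriv (m+1) g s| ≤ B) (b : ℝ) (hb : 0 ≤ b) :
    |g b - ∑ k ∈ Finset.range (m+1), ((Nat.factorial k : ℝ)⁻¹ * b ^ k) * iteratedDeriv k g 0|
      ≤ B * b ^ (m+1) / Nat.factorial m := by
  rcases eq_or_lt_of_le hb with rfl | hb0
  · have : ∑ k ∈ Finset.range (m+1), ((Nat.factorial k : ℝ)⁻¹ * (0:ℝ) ^ k) * iteratedDeriv k g 0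
        = g 0 := by
      rw [Finset.sum_eq_single 0]
      · simp
      · intro k _ hk0
        rcases Nat.exists_eq_succ_of_ne_zero hk0 with ⟨j, rfl⟩
        simp
      · simp
    simp [this]
  · have hud : UniqueDiffOn ℝ (Icc (0:ℝ) b) := uniqueDiffOn_Icc hb0
    have hmem : b ∈ Icc (0:ℝ) b := ⟨hb, le_rfl⟩
    have h0mem : (0:ℝ) ∈ Icc (0:ℝ) b := ⟨le_rfl, hb⟩
    have hbound := taylor_mean_remainder_bound (f := g) (a := 0) (b := b) (C := B)
      (n := m) hb (hg.contDiffOn) hmem ?_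
    · have heq : taylorWithinEval g m (Icc 0 b) 0 b
          = ∑ k ∈ Finset.range (m+1), ((Nat.factorial k : ℝ)⁻¹ * b ^ k) * iteratedDeriv k g 0 := by
        rw [taylor_within_apply]
        refine Finset.sum_congr rfl fun k hk => ?_
        rw [iterDW_eq g (m+1) hg hud h0mem k (by
          have := Finset.mem_range.mp hk; omega)]
        simp [smul_eq_mul]
      rw [← heq]
      simpa [Real.norm_eq_abs] using hbound
    · intro y hy
      rw [iterDW_eq g (m+1) hg hud hy (m+1) le_rfl]
      simpa [Real.norm_eq_abs] using hB y

lemma rpow_mvt (p M : ℝ) (hp : 1 ≤ p) (hM : 0 ≤ M) (a b : ℝ) (ha : a ∈ Icc 0 M)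
    (hb : b ∈ Icc 0 M) : |a ^ p - b ^ p| ≤ p * M ^ (p - 1) * |a - b| := by
  have hconv : Convex ℝ (Icc (0:ℝ) M) := convex_Icc _ _
  have hd : ∀ u ∈ Icc (0:ℝ) M, HasDerivWithinAt (fun x : ℝ => x ^ p)
      (p * u ^ (p - 1)) (Icc (0:ℝ) M) u := fun u _ =>
    (Real.hasDerivAt_rpow_const (Or.inr hp)).hasDerivWithinAt
  have hbound : ∀ u ∈ Icc (0:ℝ) M, ‖p * u ^ (p - 1)‖ ≤ p * M ^ (p - 1) := by
    intro u hu
    rw [Real.norm_eq_abs, abs_mul, abs_of_nonneg (by linarith : (0:ℝ) ≤ p),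
      abs_of_nonneg (Real.rpow_nonneg hu.1 _)]
    exact mul_le_mul_of_nonneg_left
      (Real.rpow_le_rpow hu.1 hu.2 (by linarith)) (by linarith)
  have := hconv.norm_image_sub_le_of_norm_hasDerivWithin_le hd hbound hb ha
  simpa [Real.norm_eq_abs] using this


lemma key_diff {N : ℕ} (m : ℕ) (hm : 0 < m) (f : E N → ℝ) (hf : ContDiff ℝ (m+1) f)
    (S : ℝ) (hS0 : 0 ≤ S) (hS1 : ∀ z : E N, ‖iteratedFDeriv ℝ (m+1) f z‖ ≤ S) (x h : E N) :
    |Rm m f x (x + h) - (-1:ℝ)^m * iteratedFDeriv ℝ m f x (fun _ => (m:ℝ)⁻¹ • h)|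
      ≤ (2^m * (m:ℝ)^(m+1) / Nat.factorial m) * S * ‖(m:ℝ)⁻¹ • h‖^(m+1) := by
  set t : E N := (m:ℝ)⁻¹ • h with ht
  set g : ℝ → ℝ := fun s : ℝ => f (x + s • t) with hgdef
  have hm0 : (m:ℝ) ≠ 0 := Nat.cast_ne_zero.mpr hm.ne'
  -- g is smooth
  have hg : ContDiff ℝ (m+1) g :=
    hf.comp (contDiff_const.add (contDiff_id.smul contDiff_const))
  -- rewrite Rm as alternating sum of g j
  have hRm : Rm m f x (x + h) = ∑ j ∈ Finset.range (m+1),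
      (-1:ℝ)^j * (m.choose j : ℝ) * g (j:ℝ) := by
    refine Finset.sum_congr rfl fun j hj => ?_
    have hjm : j ≤ m := by have := Finset.mem_range.mp hj; omega
    congr 1
    have h1 : ((m - j:ℕ):ℝ) = (m:ℝ) - (j:ℝ) := by
      rw [Nat.cast_sub hjm]
    rw [hgdef]
    congr 1
    rw [h1, ht, smul_smul]
    have h2 : ((m:ℝ) - j)/(m:ℝ) = 1 - (j:ℝ)/m := by field_simp
    rw [h2, smul_add, sub_smul, one_smul]
    have h3 : (j:ℝ) * (m:ℝ)⁻¹ = (j:ℝ)/m := by ring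
    rw [h3]
    abel
  -- bound on (m+1)-st derivative of g
  have hB : ∀ s : ℝ, |iteratedDeriv (m+1) g s| ≤ S * ‖t‖^(m+1) := by
    intro s
    rw [hgdef, iteratedDeriv_line (m+1) f hf x t (m+1) le_rfl s]
    calc |iteratedFDeriv ℝ (m+1) f (x + s • t) (fun _ => t)|
        ≤ ‖iteratedFDeriv ℝ (m+1) f (x + s • t)‖ * ∏ _i : Fin (m+1), ‖t‖ :=
          (iteratedFDeriv ℝ (m+1) f (x + s • t)).le_opNorm _
      _ ≤ S * ‖t‖^(m+1) := by
          rw [Finset.prod_const, Finset.card_univ, Fintype.card_fin]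
          exact mul_le_mul_of_nonneg_right (hS1 _) (by positivity)
  -- Taylor coefficients
  set c : ℕ → ℝ := fun k => (Nat.factorial k : ℝ)⁻¹ * iteratedDeriv k g 0 with hc
  set T : ℝ → ℝ := fun b => ∑ k ∈ Finset.range (m+1), c k * b ^ k with hT
  -- alternating sum of Taylor polynomial
  have hTsum : ∑ j ∈ Finset.range (m+1), (-1:ℝ)^j * (m.choose j : ℝ) * T (j:ℝ)
      = (-1:ℝ)^m * iteratedDeriv m g 0 := by
    have inner : ∀ k : ℕ, k ≤ m →
        ∑ j ∈ Finset.range (m+1), (-1:ℝ)^j * (m.choose j : ℝ) * (j:ℝ)^k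
          = (-1:ℝ)^m * (if k = m then (Nat.factorial m : ℝ) else 0) := by
      intro k hk
      have hfd := fwdDiff_iter_eq_sum_shift (1:ℝ) (fun s : ℝ => s^k) m 0
      rw [comb_pow m k hk] at hfd
      simp only [zsmul_eq_mul, zero_add, nsmul_eq_mul, mul_one] at hfd
      push_cast at hfd
      have hfd2 : (if k = m then (Nat.factorial m : ℝ) else 0)
          = ∑ j ∈ Finset.range (m+1), (-1:ℝ)^(m-j) * (m.choose j : ℝ) * (j:ℝ)^k := by exact_mod_cast hfd
      rw [hfd2, Finset.mul_sum]
      refine Finset.sum_congr rfl fun j hj => ?_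
      have hjm : j ≤ m := by have := Finset.mem_range.mp hj; omega
      have hsign : (-1:ℝ)^m * (-1:ℝ)^(m-j) = (-1:ℝ)^j := by
        rw [← pow_add]
        have : m + (m - j) = j + 2 * (m - j) := by omega
        rw [this, pow_add, pow_mul, neg_one_sq, one_pow, mul_one]
      rw [← hsign]; ring
    have swap : ∑ j ∈ Finset.range (m+1), (-1:ℝ)^j * (m.choose j : ℝ) * T (j:ℝ)
        = ∑ k ∈ Finset.range (m+1), c k *
            (∑ j ∈ Finset.range (m+1), (-1:ℝ)^j * (m.choose j : ℝ) * (j:ℝ)^k) := by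
      rw [hT]
      simp only [Finset.mul_sum]
      rw [Finset.sum_comm]
      refine Finset.sum_congr rfl fun k _ => ?_
      refine Finset.sum_congr rfl fun j _ => ?_
      ring
    rw [swap]
    have : ∀ k ∈ Finset.range (m+1), c k *
        (∑ j ∈ Finset.range (m+1), (-1:ℝ)^j * (m.choose j : ℝ) * (j:ℝ)^k)
        = c k * ((-1:ℝ)^m * (if k = m then (Nat.factorial m : ℝ) else 0)) := by
      intro k hk
      rw [inner k (by have := Finset.mem_range.mp hk; omega)]
    rw [Finset.sum_congr rfl this]
    simp only [mul_ite, mul_zero]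
    rw [Finset.sum_ite_eq' (Finset.range (m+1)) m
      (fun k => c k * ((-1:ℝ)^m * (Nat.factorial m : ℝ)))]
    rw [if_pos (Finset.mem_range.mpr (by omega)), hc]
    have : (Nat.factorial m : ℝ) ≠ 0 := Nat.cast_ne_zero.mpr (Nat.factorial_ne_zero m)
    field_simp
  -- final deriv identification
  have hgm : iteratedDeriv m g 0 = iteratedFDeriv ℝ m f x (fun _ => t) := by
    have := iteratedDeriv_line (m+1) f hf x t m (by omega) 0
    simpa using this
  -- assemble
  rw [hRm, ← hgm, ← hTsum, ← Finset.sum_sub_distrib]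
  have step : ∀ j ∈ Finset.range (m+1),
      |(-1:ℝ)^j * (m.choose j : ℝ) * g (j:ℝ) - (-1:ℝ)^j * (m.choose j : ℝ) * T (j:ℝ)|
        ≤ (m.choose j : ℝ) * (S * ‖t‖^(m+1) * (m:ℝ)^(m+1) / Nat.factorial m) := by
    intro j hj
    have hjm : j ≤ m := by have := Finset.mem_range.mp hj; omega
    have htay := taylor_global g m hg (S * ‖t‖^(m+1)) hB (j:ℝ) (Nat.cast_nonneg j)
    have hTj : T (j:ℝ) = ∑ k ∈ Finset.range (m+1),
        ((Nat.factorial k : ℝ)⁻¹ * (j:ℝ) ^ k) * iteratedDeriv k g 0 := by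
      rw [hT]
      refine Finset.sum_congr rfl fun k _ => ?_
      rw [hc]; ring
    rw [← mul_sub, abs_mul, abs_mul, abs_pow, abs_neg, abs_one, one_pow, one_mul,
      Nat.abs_cast, hTj]
    refine mul_le_mul_of_nonneg_left ?_ (Nat.cast_nonneg _)
    refine le_trans htay ?_
    have hjpow : ((j:ℝ))^(m+1) ≤ ((m:ℝ))^(m+1) := by
      apply pow_le_pow_left₀ (Nat.cast_nonneg j)
      exact_mod_cast hjm
    have hfac : (0:ℝ) < Nat.factorial m := by
      exact_mod_cast Nat.factorial_pos m
    rw [div_le_div_iff_of_pos_right hfac]  -- maybe wrong name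
    exact mul_le_mul_of_nonneg_left hjpow (by positivity)
  calc |∑ j ∈ Finset.range (m+1), ((-1:ℝ)^j * (m.choose j : ℝ) * g (j:ℝ)
          - (-1:ℝ)^j * (m.choose j : ℝ) * T (j:ℝ))|
      ≤ ∑ j ∈ Finset.range (m+1), |(-1:ℝ)^j * (m.choose j : ℝ) * g (j:ℝ)
          - (-1:ℝ)^j * (m.choose j : ℝ) * T (j:ℝ)| := Finset.abs_sum_le_sum_abs _ _
    _ ≤ ∑ j ∈ Finset.range (m+1), (m.choose j : ℝ) * (S * ‖t‖^(m+1) * (m:ℝ)^(m+1) / Nat.factorial m) :=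
        Finset.sum_le_sum step
    _ = (2^m * (m:ℝ)^(m+1) / Nat.factorial m) * S * ‖t‖^(m+1) := by
        rw [← Finset.sum_mul]
        have : ∑ j ∈ Finset.range (m+1), (m.choose j : ℝ) = 2^m := by
          exact_mod_cast congrArg (Nat.cast : ℕ → ℝ) (Nat.sum_range_choose m)
        rw [this]
        ring

theorem Rm_uniform_approx {N : ℕ} (m : ℕ) (hm : 0 < m) (p : ℝ) (hp1 : 1 < p)
    (K : Set (E N)) (hKconv : Convex ℝ K) (hKsym : ∀ x ∈ K, -x ∈ K)
    (hK0 : (0 : E N) ∈ K) (hKint : (interior K).Nonempty)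
    (hKbd : Bornology.IsBounded K)
    (A : ℝ) (hA : 0 < A) (hAle : ∀ x : E N, A * ‖x‖ ≤ gauge K x)
    (f : E N → ℝ) (hf : ContDiff ℝ (m + 1) f) (hsupp : HasCompactSupport f)
    (S : ℝ) (hS : ∀ x : E N, ∀ k ≤ m + 1, ‖iteratedFDeriv ℝ k f x‖ ≤ S) :
    ∀ δ > 0, ∃ C > 0, ∀ x : E N, ∀ h : E N, h ≠ 0 →
      |(m : ℝ) ^ ((m : ℝ) * p) * |Rm m f x (x + h)| ^ p / gauge K h ^ ((m : ℝ) * p) -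
          |iteratedFDeriv ℝ m f x (fun _ => (gauge K h)⁻¹ • h)| ^ p| ≤
        C * A ^ (-(m : ℝ) - 1) * S * gauge K h + δ := by
  intro δ hδ
  have hS0 : 0 ≤ S := le_trans (norm_nonneg _) (hS 0 0 (by omega))
  have hfac : (0:ℝ) < Nat.factorial m := by exact_mod_cast Nat.factorial_pos m
  set c' : ℝ := 2^m * (m:ℝ)^(m+1) / Nat.factorial m with hc'
  have hm0 : (0:ℝ) < (m:ℝ) := by exact_mod_cast hm
  have hc'pos : 0 < c' := by rw [hc']; positivity
  set c₂ : ℝ := (m:ℝ)^m * c' with hc₂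
  have hc₂pos : 0 < c₂ := by rw [hc₂]; positivity
  set M : ℝ := S/A^m + c₂*S/A^(m+1) + (m:ℝ)^m * 2^m * S with hM
  have hMnn : 0 ≤ M := by rw [hM]; positivity
  refine ⟨p * M^(p-1) * c₂ + 1, by positivity, ?_⟩
  intro x h hh
  set q : ℝ := gauge K h with hq
  have hqpos : 0 < q := lt_of_lt_of_le (mul_pos hA (norm_pos_iff.mpr hh)) (hAle h)
  have hhq : ‖h‖ ≤ q / A := by rw [le_div_iff₀ hA, mul_comm]; exact hAle h
  -- scaling of the multilinear map
  have hsmulW : ∀ r : ℝ, iteratedFDeriv ℝ m f x (fun _ => r • h)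
      = r^m * iteratedFDeriv ℝ m f x (fun _ => h) := by
    intro r
    have h1 := (iteratedFDeriv ℝ m f x).map_smul_univ (fun _ : Fin m => r) (fun _ => h)
    simpa [smul_eq_mul, Finset.prod_const, Finset.card_univ] using h1
  set W : ℝ := iteratedFDeriv ℝ m f x (fun _ => h) with hWdef
  set R₀ : ℝ := Rm m f x (x + h) with hR₀
  have hWbd : |W| ≤ S * ‖h‖^m := by
    rw [hWdef]
    calc |iteratedFDeriv ℝ m f x (fun _ => h)|
        ≤ ‖iteratedFDeriv ℝ m f x‖ * ∏ _i : Fin m, ‖h‖ :=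
          (iteratedFDeriv ℝ m f x).le_opNorm _
      _ ≤ S * ‖h‖^m := by
          rw [Finset.prod_const, Finset.card_univ, Fintype.card_fin]
          exact mul_le_mul_of_nonneg_right (hS x m (by omega)) (by positivity)
  set a₀ : ℝ := (m:ℝ)^m * |R₀| / q^m with ha₀
  set b₀ : ℝ := |iteratedFDeriv ℝ m f x (fun _ => q⁻¹ • h)| with hb₀
  have ha₀nn : 0 ≤ a₀ := by rw [ha₀]; positivity
  have hb₀nn : 0 ≤ b₀ := abs_nonneg _
  have hb₀W : b₀ = |W| / q^m := by
    rw [hb₀, hsmulW q⁻¹, abs_mul, abs_pow, abs_of_nonneg (inv_nonneg.mpr hqpos.le),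
      inv_pow, div_eq_inv_mul]
  -- key estimate
  have hkey := key_diff m hm f hf S hS0 (fun z => hS z (m+1) le_rfl) x h
  rw [hsmulW ((m:ℝ)⁻¹)] at hkey
  have htnorm : ‖(m:ℝ)⁻¹ • h‖ = (m:ℝ)⁻¹ * ‖h‖ := by
    rw [norm_smul, Real.norm_eq_abs, abs_of_nonneg (by positivity)]
  have hT1 : ‖(m:ℝ)⁻¹ • h‖ ≤ q / A := by
    rw [htnorm]
    calc (m:ℝ)⁻¹ * ‖h‖ ≤ 1 * ‖h‖ := by
          apply mul_le_mul_of_nonneg_right _ (norm_nonneg h)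
          rw [inv_le_one_iff₀]
          right
          exact_mod_cast hm
      _ = ‖h‖ := one_mul _
      _ ≤ q / A := hhq
  have hT2 : ‖(m:ℝ)⁻¹ • h‖^(m+1) ≤ (q/A)^(m+1) :=
    pow_le_pow_left₀ (norm_nonneg _) hT1 _
  -- |a₀ - b₀| bound
  have hstep : abs ((m:ℝ)^m * |R₀| - |W|) ≤ c₂ * S * (q/A)^(m+1) := by
    have h2 : |(m:ℝ)^m * R₀ - (-1:ℝ)^m * W|
        ≤ (m:ℝ)^m * (c' * S * ‖(m:ℝ)⁻¹ • h‖^(m+1)) := by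
      have h4 : (m:ℝ)^m * R₀ - (-1:ℝ)^m * W
          = (m:ℝ)^m * (R₀ - (-1:ℝ)^m * (((m:ℝ)⁻¹)^m * W)) := by
        field_simp
        have hmm : (m:ℝ)^m * ((m:ℝ)⁻¹)^m = 1 := by
          rw [← mul_pow, mul_inv_cancel₀ hm0.ne', one_pow]
        linear_combination (W * (-1:ℝ)^m) * hmm
      rw [h4, abs_mul, abs_of_nonneg (by positivity : (0:ℝ) ≤ (m:ℝ)^m)]
      refine mul_le_mul_of_nonneg_left ?_ (by positivity)
      calc |R₀ - (-1:ℝ)^m * (((m:ℝ)⁻¹)^m * W)| = |R₀ - (-1:ℝ)^m * (((m:ℝ)⁻¹)^m * W)| := rfl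
        _ ≤ c' * S * ‖(m:ℝ)⁻¹ • h‖^(m+1) := by
            convert hkey using 3
    have h5 : abs ((m:ℝ)^m * |R₀| - |W|) ≤ |(m:ℝ)^m * R₀ - (-1:ℝ)^m * W| := by
      have e1 : (m:ℝ)^m * |R₀| = |(m:ℝ)^m * R₀| := by
        rw [abs_mul, abs_of_nonneg (by positivity : (0:ℝ) ≤ (m:ℝ)^m)]
      have e2 : |W| = |(-1:ℝ)^m * W| := by
        rw [abs_mul, abs_pow, abs_neg, abs_one, one_pow, one_mul]
      rw [e1, e2]
      exact abs_abs_sub_abs_le_abs_sub _ _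
    calc abs ((m:ℝ)^m * |R₀| - |W|) ≤ |(m:ℝ)^m * R₀ - (-1:ℝ)^m * W| := h5
      _ ≤ (m:ℝ)^m * (c' * S * ‖(m:ℝ)⁻¹ • h‖^(m+1)) := h2
      _ ≤ (m:ℝ)^m * (c' * S * (q/A)^(m+1)) := by
          refine mul_le_mul_of_nonneg_left ?_ (by positivity)
          exact mul_le_mul_of_nonneg_left hT2 (by positivity)
      _ = c₂ * S * (q/A)^(m+1) := by rw [hc₂]; ring
  have hab : |a₀ - b₀| ≤ c₂ * S * q / A^(m+1) := by
    have h6 : a₀ - b₀ = ((m:ℝ)^m * |R₀| - |W|) / q^m := by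
      rw [ha₀, hb₀W]; ring
    have h7 : (q/A)^(m+1) = q^m * q / A^(m+1) := by
      rw [div_pow, pow_succ]
    rw [h6, abs_div, abs_of_nonneg (by positivity : (0:ℝ) ≤ q^m),
      div_le_div_iff₀ (by positivity) (by positivity)]
    calc abs ((m:ℝ)^m * |R₀| - |W|) * A^(m+1)
        ≤ (c₂ * S * (q/A)^(m+1)) * A^(m+1) := mul_le_mul_of_nonneg_right hstep (by positivity)
      _ = c₂ * S * q * q^m := by
          rw [h7]
          field_simp
  -- bounds for a₀ and b₀
  have hb₀M : b₀ ≤ M := by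
    have h8 : b₀ ≤ S / A^m := by
      rw [hb₀W]
      calc |W| / q^m ≤ (S * ‖h‖^m) / q^m := by
            exact div_le_div_of_nonneg_right hWbd (by positivity)  -- name?
        _ ≤ S / A^m := by
            rw [div_le_div_iff₀ (by positivity) (by positivity)]
            calc S * ‖h‖^m * A^m = S * (‖h‖*A)^m := by rw [mul_pow]; ring
              _ ≤ S * q^m := by
                  refine mul_le_mul_of_nonneg_left ?_ hS0
                  refine pow_le_pow_left₀ (by positivity) ?_ m
                  calc ‖h‖ * A ≤ (q/A) * A := mul_le_mul_of_nonneg_right hhq hA.le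
                    _ = q := by field_simp
    rw [hM]
    have : 0 ≤ c₂*S/A^(m+1) := by positivity
    have : 0 ≤ (m:ℝ)^m * 2^m * S := by positivity
    linarith
  have ha₀M : a₀ ≤ M := by
    rcases le_total q 1 with hq1 | hq1
    · have h9 : a₀ ≤ b₀ + |a₀ - b₀| := by
        have := le_abs_self (a₀ - b₀)
        linarith
      have h10 : c₂ * S * q / A^(m+1) ≤ c₂ * S / A^(m+1) := by
        apply div_le_div_of_nonneg_right _ (by positivity)  -- name?
        calc c₂ * S * q ≤ c₂ * S * 1 := by
              refine mul_le_mul_of_nonneg_left hq1 (by positivity)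
          _ = c₂ * S := mul_one _
      have h8 : b₀ ≤ S / A^m := by
        rw [hb₀W]
        calc |W| / q^m ≤ (S * ‖h‖^m) / q^m :=
              div_le_div_of_nonneg_right hWbd (by positivity)
          _ ≤ S / A^m := by
              rw [div_le_div_iff₀ (by positivity) (by positivity)]
              calc S * ‖h‖^m * A^m = S * (‖h‖*A)^m := by rw [mul_pow]; ring
                _ ≤ S * q^m := by
                    refine mul_le_mul_of_nonneg_left ?_ hS0
                    refine pow_le_pow_left₀ (by positivity) ?_ m
                    calc ‖h‖ * A ≤ (q/A) * A := mul_le_mul_of_nonneg_right hhq hA.le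
                      _ = q := by field_simp
      rw [hM]
      have hmn : 0 ≤ (m:ℝ)^m * 2^m * S := by positivity
      have := hab
      linarith
    · have hRbd : |R₀| ≤ 2^m * S := by
        rw [hR₀, Rm]
        calc |∑ j ∈ Finset.range (m + 1), (-1 : ℝ) ^ j * (m.choose j : ℝ) *
              f ((((m - j : ℕ) : ℝ) / (m : ℝ)) • x + ((j : ℝ) / (m : ℝ)) • (x+h))|
            ≤ ∑ j ∈ Finset.range (m + 1), |(-1 : ℝ) ^ j * (m.choose j : ℝ) *
              f ((((m - j : ℕ) : ℝ) / (m : ℝ)) • x + ((j : ℝ) / (m : ℝ)) • (x+h))| :=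
              Finset.abs_sum_le_sum_abs _ _
          _ ≤ ∑ j ∈ Finset.range (m + 1), (m.choose j : ℝ) * S := by
              refine Finset.sum_le_sum fun j _ => ?_
              rw [abs_mul, abs_mul, abs_pow, abs_neg, abs_one, one_pow, one_mul, Nat.abs_cast]
              refine mul_le_mul_of_nonneg_left ?_ (Nat.cast_nonneg _)
              have := hS ((((m - j : ℕ) : ℝ) / (m : ℝ)) • x + ((j : ℝ) / (m : ℝ)) • (x+h)) 0 (by omega)
              rwa [norm_iteratedFDeriv_zero, Real.norm_eq_abs] at this
          _ = 2^m * S := by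
              rw [← Finset.sum_mul]
              congr 1
              exact_mod_cast congrArg (Nat.cast : ℕ → ℝ) (Nat.sum_range_choose m)
      have h11 : a₀ ≤ (m:ℝ)^m * 2^m * S := by
        rw [ha₀]
        calc (m:ℝ)^m * |R₀| / q^m ≤ (m:ℝ)^m * (2^m*S) / q^m := by
              apply div_le_div_of_nonneg_right _ (by positivity)
              exact mul_le_mul_of_nonneg_left hRbd (by positivity)
          _ ≤ (m:ℝ)^m * (2^m*S) / 1 := by
              apply div_le_div_of_nonneg_left (by positivity) (by positivity)
              exact one_le_pow₀ hq1
          _ = (m:ℝ)^m * 2^m * S := by ring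
      rw [hM]
      have h12 : 0 ≤ S/A^m := by positivity
      have h13 : 0 ≤ c₂*S/A^(m+1) := by positivity
      linarith
  -- rewrite the goal
  have e1 : (m:ℝ)^((m:ℝ)*p) = ((m:ℝ)^m)^p := by
    rw [Real.rpow_mul hm0.le, Real.rpow_natCast]
  have e2 : q^((m:ℝ)*p) = (q^m)^p := by
    rw [Real.rpow_mul hqpos.le, Real.rpow_natCast]
  have e3 : (m:ℝ)^((m:ℝ)*p) * |R₀|^p / q^((m:ℝ)*p) = a₀^p := by
    rw [e1, e2, ha₀, Real.div_rpow (by positivity) (by positivity),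
      Real.mul_rpow (by positivity) (abs_nonneg _)]
  have eA : A^(-(m:ℝ)-1) = (A^(m+1))⁻¹ := by
    rw [show (-(m:ℝ)-1) = -(((m+1:ℕ)):ℝ) by push_cast; ring, Real.rpow_neg hA.le,
      Real.rpow_natCast]
  rw [e3, eA]
  have hmvt := rpow_mvt p M hp1.le hMnn a₀ b₀ ⟨ha₀nn, ha₀M⟩ ⟨hb₀nn, hb₀M⟩
  have hfinal : p * M^(p-1) * |a₀ - b₀| ≤ p * M^(p-1) * (c₂ * S * q / A^(m+1)) :=
    mul_le_mul_of_nonneg_left hab (by positivity)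
  have hrhs : (p * M^(p-1) * c₂ + 1) * (A^(m+1))⁻¹ * S * q + δ
      = p * M^(p-1) * (c₂ * S * q / A^(m+1)) + (S*q/A^(m+1) + δ) := by
    field_simp
    ring
  rw [hrhs]
  have : 0 ≤ S*q/A^(m+1) := by positivity
  linarith
end
end
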